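/- Let d ∈ {2,3}, let Ω ⊂ ℝ^d be a bounded measurable set, T > 0, G an invertible real d×d matrix, and h : (0,T) → ℝ^d measurable. Then for every p ∈ (1,2) and every ε ∈ (0,1), ∫_Ω ( ∫_0^T |Gx − h(t)|^{−pd/2} dt )^{(2−ε)/p} dx < ∞; that is, the function f(x,t) = |Gx − h(t)|^{−d/2} belongs to L^{2−ε}(Ω; L^p((0,T))). Moreover, for every fixed t and every λ > 0, the distribution function satisfies |{x ∈ Ω : |Gx − h(t)|^{−pd/2} > λ}| ≤ ω_d ‖G⁻¹‖^d λ^{−2/p}, where ω_d is the Lebesgue measure of the unit ball in ℝ^d. -/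

import Mathlib

open MeasureTheory

section Aux

open Set Metric ENNReal

/-- Uniform (in the center `b`) bound for `∫_Ω ‖x-b‖^{-α}` when `0 < α < d`. -/
lemma aux_unif_bound (d : ℕ) (Ω : Set (EuclideanSpace ℝ (Fin d)))
    (hΩb : Bornology.IsBounded Ω) {α : ℝ} (hα : 0 < α) (hαd : α < d) :
    ∃ C : ℝ≥0∞, C < ⊤ ∧ ∀ b : EuclideanSpace ℝ (Fin d),
      (∫⁻ x in Ω, (ENNReal.ofReal ‖x - b‖) ^ (-α)) ≤ C := by
  have hd0 : 0 < d := by exact_mod_cast hα.trans hαd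
  haveI : NeZero d := ⟨hd0.ne'⟩
  haveI : Nontrivial (EuclideanSpace ℝ (Fin d)) := inferInstance
  set ωd := volume (ball (0 : EuclideanSpace ℝ (Fin d)) 1) with hωd
  set K := ∫⁻ t in Ioi (1:ℝ), ENNReal.ofReal (t ^ (-((d:ℝ)/α))) with hKdef
  have hexp : -((d:ℝ)/α) < -1 := by
    rw [neg_lt_neg_iff]
    exact (one_lt_div hα).mpr hαd
  have hK : K < ⊤ := (integrableOn_Ioi_rpow_of_lt hexp one_pos).lintegral_lt_top
  refine ⟨volume Ω + ωd * K, ?_, ?_⟩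
  · exact ENNReal.add_lt_top.mpr ⟨hΩb.measure_lt_top,
      ENNReal.mul_lt_top measure_ball_lt_top hK⟩
  intro b
  have hmeas : Measurable fun x : EuclideanSpace ℝ (Fin d) => ‖x - b‖ ^ (-α) :=
    (measurable_id.sub measurable_const).norm.pow_const _
  have hae : ∀ᵐ x ∂(volume.restrict Ω),
      (ENNReal.ofReal ‖x - b‖) ^ (-α) = ENNReal.ofReal (‖x - b‖ ^ (-α)) := by
    refine ae_restrict_of_ae (ae_iff.mpr (measure_mono_null ?_ (measure_singleton b)))
    intro x hx
    simp only [mem_setOf_eq] at hx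
    by_contra hxb
    have hpos : (0:ℝ) < ‖x - b‖ := norm_pos_iff.mpr (sub_ne_zero.mpr hxb)
    exact hx (ENNReal.ofReal_rpow_of_pos hpos)
  rw [lintegral_congr_ae hae,
    lintegral_eq_lintegral_meas_lt _ (ae_of_all _ fun x => Real.rpow_nonneg (norm_nonneg _) _)
      hmeas.aemeasurable]
  have hsplit : Ioi (0:ℝ) = Ioc 0 1 ∪ Ioi 1 := (Set.Ioc_union_Ioi_eq_Ioi zero_le_one).symm
  rw [hsplit, lintegral_union measurableSet_Ioi (Set.Ioc_disjoint_Ioi le_rfl)]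
  have h1 : (∫⁻ t in Ioc (0:ℝ) 1,
      (volume.restrict Ω) {x | t < ‖x - b‖ ^ (-α)}) ≤ volume Ω := by
    calc (∫⁻ t in Ioc (0:ℝ) 1, (volume.restrict Ω) {x | t < ‖x - b‖ ^ (-α)})
        ≤ ∫⁻ _ in Ioc (0:ℝ) 1, volume Ω := by
          refine setLIntegral_mono measurable_const fun t _ => ?_
          exact (measure_mono (subset_univ _)).trans_eq (Measure.restrict_apply_univ _)
      _ = volume Ω := by
          rw [setLIntegral_const, Real.volume_Ioc]
          simp
  have h2 : (∫⁻ t in Ioi (1:ℝ),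
      (volume.restrict Ω) {x | t < ‖x - b‖ ^ (-α)}) ≤ ωd * K := by
    have hb : ∀ t ∈ Ioi (1:ℝ), (volume.restrict Ω) {x | t < ‖x - b‖ ^ (-α)}
        ≤ ENNReal.ofReal (t ^ (-((d:ℝ)/α))) * ωd := by
      intro t ht
      have ht0 : (0:ℝ) < t := lt_trans one_pos ht
      have hsub : {x : EuclideanSpace ℝ (Fin d) | t < ‖x - b‖ ^ (-α)}
          ⊆ closedBall b (t ^ (-(1/α))) := by
        intro x hx
        simp only [mem_setOf_eq] at hx
        rw [mem_closedBall, dist_eq_norm]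
        rcases eq_or_lt_of_le (norm_nonneg (x - b)) with h0 | h0
        · rw [← h0]; exact Real.rpow_nonneg ht0.le _
        · have hneg : -(1/α) < 0 := by
            have : 0 < 1/α := by positivity
            linarith
          have hlt := Real.rpow_lt_rpow_of_neg ht0 hx hneg
          rw [← Real.rpow_mul (norm_nonneg (x - b))] at hlt
          have hone : -α * -(1/α) = 1 := by field_simp
          rw [hone, Real.rpow_one] at hlt
          exact hlt.le
      calc (volume.restrict Ω) {x | t < ‖x - b‖ ^ (-α)}
          ≤ volume (closedBall b (t ^ (-(1/α)))) :=
            (Measure.restrict_apply_le _ _).trans (measure_mono hsub)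
        _ = ENNReal.ofReal ((t ^ (-(1/α))) ^ Module.finrank ℝ (EuclideanSpace ℝ (Fin d))) * ωd :=
            Measure.addHaar_closedBall _ _ (Real.rpow_nonneg ht0.le _)
        _ = ENNReal.ofReal (t ^ (-((d:ℝ)/α))) * ωd := by
            rw [finrank_euclideanSpace_fin, ← Real.rpow_natCast (t ^ (-(1/α))) d,
              ← Real.rpow_mul ht0.le]
            congr 2
            ring_nf
    calc (∫⁻ t in Ioi (1:ℝ), (volume.restrict Ω) {x | t < ‖x - b‖ ^ (-α)})
        ≤ ∫⁻ t in Ioi (1:ℝ), ENNReal.ofReal (t ^ (-((d:ℝ)/α))) * ωd :=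
          setLIntegral_mono (((measurable_id.pow_const _).ennreal_ofReal).mul_const _) hb
      _ = K * ωd := lintegral_mul_const' _ _ measure_ball_lt_top.ne
      _ = ωd * K := mul_comm _ _
  exact add_le_add h1 h2

end Aux

section Aux2

open Set Metric ENNReal

lemma aux_unif_bound_G (d : ℕ) (Ω : Set (EuclideanSpace ℝ (Fin d)))
    (hΩb : Bornology.IsBounded Ω)
    (G : Matrix (Fin d) (Fin d) ℝ) (hG : IsUnit G.det) {α : ℝ} (hα : 0 < α) (hαd : α < d) :
    ∃ C : ℝ≥0∞, C < ⊤ ∧ ∀ c : EuclideanSpace ℝ (Fin d),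
      (∫⁻ x in Ω, (ENNReal.ofReal ‖Matrix.toEuclideanLin G x - c‖) ^ (-α)) ≤ C := by
  have hd0 : 0 < d := by exact_mod_cast hα.trans hαd
  haveI : NeZero d := ⟨hd0.ne'⟩
  obtain ⟨C, hC, hCb⟩ := aux_unif_bound d Ω hΩb hα hαd
  set B := Matrix.toEuclideanCLM (𝕜 := ℝ) G⁻¹ with hBdef
  have hBG : ∀ x : EuclideanSpace ℝ (Fin d), B (Matrix.toEuclideanLin G x) = x := by
    intro x
    have h1 : Matrix.toEuclideanLin G x = (Matrix.toEuclideanCLM (𝕜 := ℝ) G) x := by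
      rw [← Matrix.coe_toEuclideanCLM_eq_toEuclideanLin]
      rfl
    rw [h1, hBdef]
    have h2 : (Matrix.toEuclideanCLM (𝕜 := ℝ) G⁻¹) ((Matrix.toEuclideanCLM (𝕜 := ℝ) G) x)
        = (Matrix.toEuclideanCLM (𝕜 := ℝ) (G⁻¹ * G)) x := by
      rw [map_mul]; rfl
    rw [h2, Matrix.nonsing_inv_mul G hG, map_one]
    rfl
  have hN : 0 < ‖B‖ := by
    by_contra hcon
    push_neg at hcon
    have hB0 : B = 0 := norm_le_zero_iff.mp hcon
    obtain ⟨x, hx⟩ := exists_ne (0 : EuclideanSpace ℝ (Fin d))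
    have := hBG x
    rw [hB0] at this
    simp at this
    exact hx this.symm
  refine ⟨ENNReal.ofReal (‖B‖ ^ α) * C, ENNReal.mul_lt_top ENNReal.ofReal_lt_top hC, ?_⟩
  intro c
  calc (∫⁻ x in Ω, (ENNReal.ofReal ‖Matrix.toEuclideanLin G x - c‖) ^ (-α))
      ≤ ∫⁻ x in Ω, ENNReal.ofReal (‖B‖ ^ α) * (ENNReal.ofReal ‖x - B c‖) ^ (-α) := by
        refine lintegral_mono fun x => ?_
        have hxeq : x - B c = B (Matrix.toEuclideanLin G x - c) := by
          rw [map_sub, hBG]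
        have hm : ‖x - B c‖ ≤ ‖B‖ * ‖Matrix.toEuclideanLin G x - c‖ := by
          rw [hxeq]; exact B.le_opNorm _
        have h1 : ENNReal.ofReal ‖x - B c‖
            ≤ ENNReal.ofReal ‖B‖ * ENNReal.ofReal ‖Matrix.toEuclideanLin G x - c‖ := by
          rw [← ENNReal.ofReal_mul (norm_nonneg B)]
          exact ENNReal.ofReal_le_ofReal hm
        have h2 : (ENNReal.ofReal ‖B‖ * ENNReal.ofReal ‖Matrix.toEuclideanLin G x - c‖) ^ (-α)
            ≤ (ENNReal.ofReal ‖x - B c‖) ^ (-α) := by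
          rw [ENNReal.rpow_neg, ENNReal.rpow_neg]
          exact ENNReal.inv_le_inv.mpr (ENNReal.rpow_le_rpow h1 hα.le)
        rw [ENNReal.mul_rpow_of_ne_top ENNReal.ofReal_ne_top ENNReal.ofReal_ne_top] at h2
        have hNe0 : ENNReal.ofReal ‖B‖ ≠ 0 := ne_of_gt (ENNReal.ofReal_pos.mpr hN)
        have hkey : ENNReal.ofReal (‖B‖ ^ α) * ((ENNReal.ofReal ‖B‖) ^ (-α)
            * (ENNReal.ofReal ‖Matrix.toEuclideanLin G x - c‖) ^ (-α))
            = (ENNReal.ofReal ‖Matrix.toEuclideanLin G x - c‖) ^ (-α) := by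
          rw [← ENNReal.ofReal_rpow_of_pos hN, ← mul_assoc,
            ← ENNReal.rpow_add _ _ hNe0 ENNReal.ofReal_ne_top]
          simp
        calc (ENNReal.ofReal ‖Matrix.toEuclideanLin G x - c‖) ^ (-α)
            = ENNReal.ofReal (‖B‖ ^ α) * ((ENNReal.ofReal ‖B‖) ^ (-α)
              * (ENNReal.ofReal ‖Matrix.toEuclideanLin G x - c‖) ^ (-α)) := hkey.symm
          _ ≤ ENNReal.ofReal (‖B‖ ^ α) * (ENNReal.ofReal ‖x - B c‖) ^ (-α) :=
              mul_le_mul_right h2 _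
    _ = ENNReal.ofReal (‖B‖ ^ α) * ∫⁻ x in Ω, (ENNReal.ofReal ‖x - B c‖) ^ (-α) :=
        lintegral_const_mul' _ _ ENNReal.ofReal_ne_top
    _ ≤ ENNReal.ofReal (‖B‖ ^ α) * C := mul_le_mul_right (hCb (B c)) _

end Aux2

open ENNReal in
/-- for `d ∈ {2,3}`, `Ω` bounded, `G` invertible and `h`
measurable, the function `f(x,t) = |Gx − h(t)|^{−d/2}` belongs to
`L^{2−ε}(Ω; L^p((0,T)))` for every `p ∈ (1,2)` and `ε ∈ (0,1)`; moreover, for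
every fixed `t` and `λ > 0`, the distribution function satisfies
`|{x ∈ Ω : |Gx − h(t)|^{−pd/2} > λ}| ≤ ω_d ‖G⁻¹‖^d λ^{−2/p}`. -/
theorem kernel_mixed_norm_and_distribution_bound
    (d : ℕ) (hd : d = 2 ∨ d = 3)
    (Ω : Set (EuclideanSpace ℝ (Fin d))) (hΩm : MeasurableSet Ω)
    (hΩb : Bornology.IsBounded Ω)
    (T : ℝ) (hT : 0 < T)
    (G : Matrix (Fin d) (Fin d) ℝ) (hG : IsUnit G.det)
    (h : ℝ → EuclideanSpace ℝ (Fin d)) (hh : Measurable h) :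
    ∀ p : ℝ, 1 < p → p < 2 → ∀ ε : ℝ, 0 < ε → ε < 1 →
      ((∫⁻ x in Ω,
          (∫⁻ t in Set.Ioo (0 : ℝ) T,
            (ENNReal.ofReal ‖Matrix.toEuclideanLin G x - h t‖)
              ^ (-(p * d) / 2)) ^ ((2 - ε) / p)) < ⊤) ∧
      (∀ t : ℝ, t ∈ Set.Ioo (0 : ℝ) T → ∀ l : ℝ, 0 < l →
        volume {x ∈ Ω |
            ENNReal.ofReal l <
              (ENNReal.ofReal ‖Matrix.toEuclideanLin G x - h t‖) ^ (-(p * d) / 2)}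
          ≤ ENNReal.ofReal
              ((volume (Metric.ball (0 : EuclideanSpace ℝ (Fin d)) 1)).toReal *
                ‖Matrix.toEuclideanCLM (𝕜 := ℝ) G⁻¹‖ ^ (d : ℕ) * l ^ (-2 / p))) := by
  intro p hp1 hp2 ε hε0 hε1
  have hd2 : 2 ≤ d := by rcases hd with rfl | rfl <;> norm_num
  have hd0 : 0 < d := by omega
  have hdR : (0:ℝ) < d := by exact_mod_cast hd0
  have hp0 : 0 < p := lt_trans one_pos hp1
  haveI : NeZero d := ⟨hd0.ne'⟩
  set B := Matrix.toEuclideanCLM (𝕜 := ℝ) G⁻¹ with hBdef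
  set N := ‖B‖ with hNdef
  have hBG : ∀ x : EuclideanSpace ℝ (Fin d), B (Matrix.toEuclideanLin G x) = x := by
    intro x
    have h1 : Matrix.toEuclideanLin G x = (Matrix.toEuclideanCLM (𝕜 := ℝ) G) x := by
      rw [← Matrix.coe_toEuclideanCLM_eq_toEuclideanLin]
      rfl
    rw [h1, hBdef]
    have h2 : (Matrix.toEuclideanCLM (𝕜 := ℝ) G⁻¹) ((Matrix.toEuclideanCLM (𝕜 := ℝ) G) x)
        = (Matrix.toEuclideanCLM (𝕜 := ℝ) (G⁻¹ * G)) x := by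
      rw [map_mul]; rfl
    rw [h2, Matrix.nonsing_inv_mul G hG, map_one]
    rfl
  constructor
  · -- Part 1: finiteness of the mixed norm
    simp only [show -(p * (d:ℝ)) / 2 = -(p * (d:ℝ) / 2) from by ring]
    set q := (2 - ε) / p with hqdef
    have h2ε : (0:ℝ) < 2 - ε := by linarith
    have hq0 : 0 < q := div_pos h2ε hp0
    have hα1 : (0:ℝ) < p * d / 2 := by positivity
    have hα1d : p * (d:ℝ) / 2 < d := by nlinarith
    have hα2 : (0:ℝ) < (2 - ε) * d / 2 := by positivity
    have hα2d : (2 - ε) * (d:ℝ) / 2 < d := by nlinarith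
    obtain ⟨C1, hC1, hC1b⟩ := aux_unif_bound_G d Ω hΩb G hG hα1 hα1d
    obtain ⟨C2, hC2, hC2b⟩ := aux_unif_bound_G d Ω hΩb G hG hα2 hα2d
    have hmF : ∀ e : ℝ, Measurable (fun z : EuclideanSpace ℝ (Fin d) × ℝ =>
        (ENNReal.ofReal ‖Matrix.toEuclideanLin G z.1 - h z.2‖) ^ e) := by
      intro e
      have hc : Continuous fun x : EuclideanSpace ℝ (Fin d) => Matrix.toEuclideanLin G x :=
        (Matrix.toEuclideanLin G).continuous_of_finiteDimensional
      exact (((hc.measurable.comp measurable_fst).sub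
        (hh.comp measurable_snd)).norm.ennreal_ofReal).pow_const e
    have key : ∀ (e : ℝ) (C : ℝ≥0∞),
        (∀ c, (∫⁻ x in Ω, (ENNReal.ofReal ‖Matrix.toEuclideanLin G x - c‖) ^ e) ≤ C) →
        (∫⁻ x in Ω, ∫⁻ t in Set.Ioo (0:ℝ) T,
          (ENNReal.ofReal ‖Matrix.toEuclideanLin G x - h t‖) ^ e) ≤ C * ENNReal.ofReal T := by
      intro e C hC
      rw [lintegral_lintegral_swap (hmF e).aemeasurable]
      calc (∫⁻ t in Set.Ioo (0:ℝ) T, ∫⁻ x in Ω,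
            (ENNReal.ofReal ‖Matrix.toEuclideanLin G x - h t‖) ^ e)
          ≤ ∫⁻ _ in Set.Ioo (0:ℝ) T, C := lintegral_mono fun t => hC (h t)
        _ = C * ENNReal.ofReal T := by rw [setLIntegral_const, Real.volume_Ioo, sub_zero]
    rcases le_or_gt q 1 with hq1 | hq1
    · -- subcase q ≤ 1 : use a^q ≤ 1 + a
      have hpt : ∀ x : EuclideanSpace ℝ (Fin d),
          (∫⁻ t in Set.Ioo (0:ℝ) T,
            (ENNReal.ofReal ‖Matrix.toEuclideanLin G x - h t‖) ^ (-(p * (d:ℝ) / 2))) ^ q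
          ≤ 1 + ∫⁻ t in Set.Ioo (0:ℝ) T,
            (ENNReal.ofReal ‖Matrix.toEuclideanLin G x - h t‖) ^ (-(p * (d:ℝ) / 2)) := by
        intro x
        set a := ∫⁻ t in Set.Ioo (0:ℝ) T,
          (ENNReal.ofReal ‖Matrix.toEuclideanLin G x - h t‖) ^ (-(p * (d:ℝ) / 2)) with hadef
        rcases le_total a 1 with hle | hle
        · exact (ENNReal.rpow_le_one hle hq0.le).trans le_self_add
        · have h1 := ENNReal.rpow_le_rpow_of_exponent_le hle hq1
          rw [ENNReal.rpow_one] at h1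
          exact h1.trans le_add_self
      calc (∫⁻ x in Ω, (∫⁻ t in Set.Ioo (0:ℝ) T,
            (ENNReal.ofReal ‖Matrix.toEuclideanLin G x - h t‖) ^ (-(p * (d:ℝ) / 2))) ^ q)
          ≤ ∫⁻ x in Ω, (1 + ∫⁻ t in Set.Ioo (0:ℝ) T,
            (ENNReal.ofReal ‖Matrix.toEuclideanLin G x - h t‖) ^ (-(p * (d:ℝ) / 2))) :=
            lintegral_mono hpt
        _ = volume Ω + ∫⁻ x in Ω, ∫⁻ t in Set.Ioo (0:ℝ) T,
            (ENNReal.ofReal ‖Matrix.toEuclideanLin G x - h t‖) ^ (-(p * (d:ℝ) / 2)) := by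
            rw [lintegral_add_left measurable_const, setLIntegral_one]
        _ ≤ volume Ω + C1 * ENNReal.ofReal T :=
            add_le_add_right (key (-(p * (d:ℝ) / 2)) C1 hC1b) _
        _ < ⊤ := ENNReal.add_lt_top.mpr ⟨hΩb.measure_lt_top,
            ENNReal.mul_lt_top hC1 ENNReal.ofReal_lt_top⟩
    · -- subcase 1 < q : use Hoelder's inequality in t
      have hq' : q.HolderConjugate (q/(q-1)) := Real.HolderConjugate.conjExponent hq1
      have hexpq : 1/(q/(q-1)) * q = q - 1 := by
        rw [one_div_div]
        field_simp
      have hpt : ∀ x : EuclideanSpace ℝ (Fin d),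
          (∫⁻ t in Set.Ioo (0:ℝ) T,
            (ENNReal.ofReal ‖Matrix.toEuclideanLin G x - h t‖) ^ (-(p * (d:ℝ) / 2))) ^ q
          ≤ (∫⁻ t in Set.Ioo (0:ℝ) T,
            (ENNReal.ofReal ‖Matrix.toEuclideanLin G x - h t‖) ^ (-((2-ε) * (d:ℝ) / 2)))
            * (ENNReal.ofReal T) ^ (q - 1) := by
        intro x
        have hmf : AEMeasurable (fun t => (ENNReal.ofReal
            ‖Matrix.toEuclideanLin G x - h t‖) ^ (-(p * (d:ℝ) / 2)))
            (volume.restrict (Set.Ioo (0:ℝ) T)) :=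
          (((measurable_const.sub hh).norm.ennreal_ofReal).pow_const _).aemeasurable
        have hH := ENNReal.lintegral_mul_le_Lp_mul_Lq (volume.restrict (Set.Ioo (0:ℝ) T)) hq'
          hmf (aemeasurable_const (b := (1:ENNReal)))
        simp only [Pi.mul_apply, Pi.one_apply, mul_one, ENNReal.one_rpow,
          setLIntegral_one, Real.volume_Ioo, sub_zero] at hH
        have h2 := ENNReal.rpow_le_rpow hH hq0.le
        rw [ENNReal.mul_rpow_of_nonneg _ _ hq0.le, ← ENNReal.rpow_mul, ← ENNReal.rpow_mul,
          one_div_mul_cancel hq0.ne', ENNReal.rpow_one, hexpq] at h2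
        have hpow : (fun t : ℝ => ((ENNReal.ofReal
            ‖Matrix.toEuclideanLin G x - h t‖) ^ (-(p * (d:ℝ) / 2))) ^ q)
            = fun t : ℝ => (ENNReal.ofReal
            ‖Matrix.toEuclideanLin G x - h t‖) ^ (-((2-ε) * (d:ℝ) / 2)) := by
          funext t
          rw [← ENNReal.rpow_mul]
          congr 1
          rw [hqdef]
          field_simp
        rwa [hpow] at h2
      calc (∫⁻ x in Ω, (∫⁻ t in Set.Ioo (0:ℝ) T,
            (ENNReal.ofReal ‖Matrix.toEuclideanLin G x - h t‖) ^ (-(p * (d:ℝ) / 2))) ^ q)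
          ≤ ∫⁻ x in Ω, (∫⁻ t in Set.Ioo (0:ℝ) T,
            (ENNReal.ofReal ‖Matrix.toEuclideanLin G x - h t‖) ^ (-((2-ε) * (d:ℝ) / 2)))
            * (ENNReal.ofReal T) ^ (q - 1) := lintegral_mono hpt
        _ = (∫⁻ x in Ω, ∫⁻ t in Set.Ioo (0:ℝ) T,
            (ENNReal.ofReal ‖Matrix.toEuclideanLin G x - h t‖) ^ (-((2-ε) * (d:ℝ) / 2)))
            * (ENNReal.ofReal T) ^ (q - 1) :=
            lintegral_mul_const' _ _
              (ENNReal.rpow_ne_top_of_nonneg (by linarith) ENNReal.ofReal_ne_top)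
        _ ≤ (C2 * ENNReal.ofReal T) * (ENNReal.ofReal T) ^ (q - 1) :=
            mul_le_mul_left (key (-((2-ε) * (d:ℝ) / 2)) C2 hC2b) _
        _ < ⊤ := ENNReal.mul_lt_top (ENNReal.mul_lt_top hC2 ENNReal.ofReal_lt_top)
            (ENNReal.rpow_lt_top_of_nonneg (by linarith) ENNReal.ofReal_ne_top)
  · -- Part 2: the distribution-function bound
    intro t ht l hl
    set c := h t with hcdef
    set ωd := volume (Metric.ball (0 : EuclideanSpace ℝ (Fin d)) 1) with hωd
    set r := l ^ (-(2/(p*(d:ℝ)))) with hrdef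
    have hr : 0 < r := Real.rpow_pos_of_pos hl _
    have hpd : (0:ℝ) < p * d := by positivity
    have hsub : {x ∈ Ω | ENNReal.ofReal l <
        (ENNReal.ofReal ‖Matrix.toEuclideanLin G x - c‖) ^ (-(p * d) / 2)}
        ⊆ Metric.closedBall (B c) (N * r) := by
      rintro x ⟨hxΩ, hxl⟩
      have ha : ‖Matrix.toEuclideanLin G x - c‖ ≤ r := by
        by_contra hcon
        push_neg at hcon
        have ha0 : 0 < ‖Matrix.toEuclideanLin G x - c‖ := hr.trans hcon
        have hle : (ENNReal.ofReal ‖Matrix.toEuclideanLin G x - c‖) ^ (-(p * d) / 2)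
            ≤ ENNReal.ofReal l := by
          rw [ENNReal.ofReal_rpow_of_pos ha0]
          apply ENNReal.ofReal_le_ofReal
          have hexp0 : -(p * (d:ℝ)) / 2 ≤ 0 := by
            apply div_nonpos_of_nonpos_of_nonneg <;> linarith
          have h2 : ‖Matrix.toEuclideanLin G x - c‖ ^ (-(p * (d:ℝ)) / 2)
              ≤ r ^ (-(p * (d:ℝ)) / 2) :=
            Real.rpow_le_rpow_of_nonpos hr hcon.le hexp0
          have h3 : r ^ (-(p * (d:ℝ)) / 2) = l := by
            rw [hrdef, ← Real.rpow_mul hl.le]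
            rw [show (-(2/(p*(d:ℝ)))) * (-(p * (d:ℝ)) / 2) = 1 by field_simp]
            exact Real.rpow_one l
          linarith
        exact absurd (hxl.trans_le hle) (lt_irrefl _)
      rw [Metric.mem_closedBall, dist_eq_norm]
      have hxeq : x - B c = B (Matrix.toEuclideanLin G x - c) := by
        rw [map_sub, hBG]
      rw [hxeq]
      exact (B.le_opNorm _).trans (mul_le_mul_of_nonneg_left ha (norm_nonneg B))
    calc volume {x ∈ Ω | ENNReal.ofReal l <
          (ENNReal.ofReal ‖Matrix.toEuclideanLin G x - c‖) ^ (-(p * d) / 2)}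
        ≤ volume (Metric.closedBall (B c) (N * r)) := measure_mono hsub
      _ = ENNReal.ofReal ((N * r) ^ Module.finrank ℝ (EuclideanSpace ℝ (Fin d))) * ωd :=
          Measure.addHaar_closedBall _ _ (mul_nonneg (norm_nonneg B) hr.le)
      _ = ENNReal.ofReal (ωd.toReal * N ^ (d : ℕ) * l ^ (-2 / p)) := by
          rw [finrank_euclideanSpace_fin]
          have hrd : r ^ (d : ℕ) = l ^ (-2 / p) := by
            rw [hrdef, ← Real.rpow_natCast (l ^ (-(2/(p*(d:ℝ))))) d, ← Real.rpow_mul hl.le]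
            congr 1
            field_simp
          rw [mul_pow, hrd, mul_assoc,
            ENNReal.ofReal_mul ENNReal.toReal_nonneg,
            ENNReal.ofReal_toReal measure_ball_lt_top.ne, mul_comm]
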